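/- If A ⊆ X has even cardinality, then μ_A = (1/4) ∑_{B ⊆ A, |B| even} 2^{|B|} · 𝔼_{|A|−|B|} · δ_B, where the sum is over all subsets B of A of even cardinality. -/

import Mathlib

open Finset

/-- The Euler numbers `𝔼ₖ`, defined by the EGF `1/cosh x = ∑ₖ 𝔼ₖ xᵏ/k!`
(so `𝔼₀ = 1`, `𝔼₂ = −1`, `𝔼₄ = 5`, and `𝔼ₖ = 0` for odd `k`); this recurrence
is obtained by equating coefficients in `cosh x · (1/cosh x) = 1`. -/
noncomputable def eulerNumber : ℕ → ℚ
  | n =>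
    (if n = 0 then 1 else 0) -
      ∑ k : Fin n, if (n - (k : ℕ)) % 2 = 0 then ((n.choose k : ℚ) * eulerNumber k) else 0
  decreasing_by exact k.2

lemma eulerNumber_zero : eulerNumber 0 = 1 := by
  rw [eulerNumber]; simp

lemma euler_rec (n : ℕ) :
    ∑ k ∈ Finset.range (n + 1),
      (if (n - k) % 2 = 0 then (n.choose k : ℚ) * eulerNumber k else 0)
      = if n = 0 then 1 else 0 := by
  have hdef : eulerNumber n = (if n = 0 then (1:ℚ) else 0) -
      ∑ k : Fin n, if (n - (k : ℕ)) % 2 = 0 then ((n.choose k : ℚ) * eulerNumber k) else 0 := by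
    rw [eulerNumber]
  rw [Finset.sum_range_succ, ← Fin.sum_univ_eq_sum_range
    (fun k => if (n - k) % 2 = 0 then (n.choose k : ℚ) * eulerNumber k else 0) n]
  norm_num
  linarith [hdef]

lemma euler_odd : ∀ n : ℕ, Odd n → eulerNumber n = 0 := by
  intro n
  induction n using Nat.strong_induction_on with
  | _ n ih =>
    intro hn
    have hn' : n % 2 = 1 := Nat.odd_iff.1 hn
    rw [eulerNumber, if_neg (by rintro rfl; simp at hn'), zero_sub, neg_eq_zero]
    apply Finset.sum_eq_zero
    intro k _
    by_cases h : (n - (k : ℕ)) % 2 = 0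
    · rw [if_pos h]
      have hk : Odd (k : ℕ) := by
        have := k.2
        rw [Nat.odd_iff]
        omega
      rw [ih k k.2 hk, mul_zero]
    · rw [if_neg h]

lemma euler_rec' (n : ℕ) :
    ∑ l ∈ Finset.range (n + 1),
      (if l % 2 = 0 then (n.choose l : ℚ) * eulerNumber (n - l) else 0)
      = if n = 0 then 1 else 0 := by
  rw [← euler_rec n]
  have := Finset.sum_range_reflect
    (fun k => if (n - k) % 2 = 0 then (n.choose k : ℚ) * eulerNumber k else 0) (n+1)
  rw [← this]
  apply Finset.sum_congr rfl
  intro l hl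
  rw [Finset.mem_range] at hl
  have hl' : l ≤ n := by omega
  simp only [Nat.add_sub_cancel]
  rw [Nat.sub_sub_self hl', Nat.choose_symm hl']

noncomputable def RR (k m : ℕ) : ℚ :=
  ∑ j ∈ Finset.range (m + 1), (m.choose j : ℚ) * 2 ^ j * eulerNumber (k + m - j)

lemma RR_zero_right (k : ℕ) : RR k 0 = eulerNumber k := by
  simp [RR]

lemma RR_succ (k m : ℕ) : RR k (m + 1) = RR (k + 1) m + 2 * RR k m := by
  have h1 : RR k (m+1) = (∑ j ∈ Finset.range (m+1),
      ((m+1).choose (j+1) : ℚ) * 2 ^ (j+1) * eulerNumber (k + m - j))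
      + eulerNumber (k + m + 1) := by
    rw [RR, Finset.sum_range_succ']
    simp only [show ∀ j : ℕ, k + (m+1) - (j+1) = k + m - j from fun j => by omega,
      show k + (m+1) - 0 = k + m + 1 from by omega]
    norm_num
  have h3 : RR (k+1) m = (∑ j ∈ Finset.range m,
      (m.choose (j+1) : ℚ) * 2 ^ (j+1) * eulerNumber (k + m - j))
      + eulerNumber (k + m + 1) := by
    rw [RR, Finset.sum_range_succ']
    simp only [show ∀ j : ℕ, k + 1 + m - (j+1) = k + m - j from fun j => by omega,
      show k + 1 + m - 0 = k + m + 1 from by omega]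
    norm_num
  have h4 : ∑ j ∈ Finset.range (m+1), ((m+1).choose (j+1) : ℚ) * 2 ^ (j+1) * eulerNumber (k + m - j)
      = (∑ j ∈ Finset.range (m+1), (m.choose j : ℚ) * 2 ^ (j+1) * eulerNumber (k + m - j))
        + ∑ j ∈ Finset.range (m+1), (m.choose (j+1) : ℚ) * 2 ^ (j+1) * eulerNumber (k + m - j) := by
    rw [← Finset.sum_add_distrib]
    apply Finset.sum_congr rfl
    intro j hj
    rw [Nat.choose_succ_succ]
    push_cast
    ring
  have h5 : ∑ j ∈ Finset.range (m+1), (m.choose (j+1) : ℚ) * 2 ^ (j+1) * eulerNumber (k + m - j)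
      = ∑ j ∈ Finset.range m, (m.choose (j+1) : ℚ) * 2 ^ (j+1) * eulerNumber (k + m - j) := by
    rw [Finset.sum_range_succ]
    simp [Nat.choose_succ_self]
  have h6 : 2 * RR k m = ∑ j ∈ Finset.range (m+1), (m.choose j : ℚ) * 2 ^ (j+1) * eulerNumber (k + m - j) := by
    rw [RR, Finset.mul_sum]
    apply Finset.sum_congr rfl
    intro j hj
    ring
  rw [h1, h4, h5, h3, h6]
  ring

lemma RR_def (k m : ℕ) :
    RR k m = ∑ j ∈ Finset.range (m + 1), (m.choose j : ℚ) * 2 ^ j * eulerNumber (k + m - j) :=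
  rfl

lemma tri (n l j : ℕ) : (n.choose l) * ((n-l).choose j) = (n.choose j) * ((n-j).choose l) := by
  rcases le_or_gt (l + j) n with h | h
  · have h1 := Nat.choose_mul (n := n) (k := l + j) (s := l) (Nat.le_add_right l j)
    have h2 := Nat.choose_mul (n := n) (k := l + j) (s := j) (Nat.le_add_left j l)
    have h3 : (l+j).choose l = (l+j).choose j := by
      rw [← Nat.choose_symm (Nat.le_add_right l j)]
      congr 1
      omega
    rw [show l + j - l = j from by omega] at h1
    rw [show l + j - j = l from by omega] at h2
    rw [← h1, ← h2, h3]
  · by_cases hl : l ≤ n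
    · rw [Nat.choose_eq_zero_of_lt (show n - l < j by omega)]
      by_cases hj : j ≤ n
      · rw [Nat.choose_eq_zero_of_lt (show n - j < l by omega)]; ring
      · rw [Nat.choose_eq_zero_of_lt (show n < j by omega)]; ring
    · rw [Nat.choose_eq_zero_of_lt (show n < l by omega)]
      by_cases hj : j ≤ n
      · rw [Nat.choose_eq_zero_of_lt (show n - j < l by omega)]; ring
      · rw [Nat.choose_eq_zero_of_lt (show n < j by omega)]; ring

lemma Frec (n : ℕ) :
    ∑ l ∈ Finset.range (n+1), (if l % 2 = 0 then (n.choose l : ℚ) * RR 0 (n - l) else 0)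
      = 2 ^ n := by
  have stepA : ∑ l ∈ Finset.range (n+1), (if l % 2 = 0 then (n.choose l : ℚ) * RR 0 (n - l) else 0)
      = ∑ l ∈ Finset.range (n+1), ∑ j ∈ Finset.range (n+1),
          (if l % 2 = 0 then (n.choose l : ℚ) * ((n-l).choose j) * 2 ^ j * eulerNumber (n-l-j) else 0) := by
    apply Finset.sum_congr rfl
    intro l hl
    rw [Finset.mem_range] at hl
    by_cases hpar : l % 2 = 0
    · rw [if_pos hpar, RR, Finset.mul_sum]
      rw [Finset.sum_subset (Finset.range_subset_range.2 (show n - l + 1 ≤ n + 1 by omega))]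
      · apply Finset.sum_congr rfl
        intro j hj
        rw [if_pos hpar, show 0 + (n - l) - j = n - l - j from by omega]
        ring
      · intro j hj1 hj2
        rw [Finset.mem_range] at hj1 hj2
        rw [Nat.choose_eq_zero_of_lt (show n - l < j by omega)]
        norm_num
    · rw [if_neg hpar]
      symm
      apply Finset.sum_eq_zero
      intro j _
      rw [if_neg hpar]
  rw [stepA]
  have stepB : ∀ l j : ℕ, (if l % 2 = 0 then (n.choose l : ℚ) * ((n-l).choose j) * 2 ^ j * eulerNumber (n-l-j) else 0)
      = (n.choose j : ℚ) * 2 ^ j * (if l % 2 = 0 then ((n-j).choose l : ℚ) * eulerNumber (n-j-l) else 0) := by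
    intro l j
    by_cases hpar : l % 2 = 0
    · rw [if_pos hpar, if_pos hpar, show n - l - j = n - j - l from by omega]
      have := tri n l j
      have hc : ((n.choose l : ℕ) : ℚ) * ((n-l).choose j : ℕ) = ((n.choose j : ℕ) : ℚ) * ((n-j).choose l : ℕ) := by
        exact_mod_cast congrArg (Nat.cast : ℕ → ℚ) this
      calc (n.choose l : ℚ) * ((n-l).choose j) * 2 ^ j * eulerNumber (n-j-l)
          = ((n.choose l : ℚ) * ((n-l).choose j)) * (2 ^ j * eulerNumber (n-j-l)) := by ring
        _ = ((n.choose j : ℚ) * ((n-j).choose l)) * (2 ^ j * eulerNumber (n-j-l)) := by rw [hc]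
        _ = (n.choose j : ℚ) * 2 ^ j * (((n-j).choose l : ℚ) * eulerNumber (n-j-l)) := by ring
    · rw [if_neg hpar, if_neg hpar, mul_zero]
  simp only [stepB]
  rw [Finset.sum_comm]
  have stepC : ∀ j ∈ Finset.range (n+1),
      ∑ l ∈ Finset.range (n+1), (n.choose j : ℚ) * 2 ^ j * (if l % 2 = 0 then ((n-j).choose l : ℚ) * eulerNumber (n-j-l) else 0)
      = (n.choose j : ℚ) * 2 ^ j * (if n - j = 0 then 1 else 0) := by
    intro j hj
    rw [← Finset.mul_sum]
    congr 1
    rw [← euler_rec' (n - j)]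
    symm
    apply Finset.sum_subset (Finset.range_subset_range.2 (show n - j + 1 ≤ n + 1 by omega))
    intro l hl1 hl2
    rw [Finset.mem_range] at hl1 hl2
    by_cases hpar : l % 2 = 0
    · rw [if_pos hpar, Nat.choose_eq_zero_of_lt (show n - j < l by omega)]
      push_cast
      ring
    · rw [if_neg hpar]
  rw [Finset.sum_congr rfl stepC]
  rw [Finset.sum_eq_single n]
  · simp
  · intro j hj1 hj2
    rw [Finset.mem_range] at hj1
    rw [if_neg (show ¬ (n - j = 0) by omega), mul_zero]
  · intro h
    exact absurd (Finset.self_mem_range_succ n) h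

lemma sum_even_choose (n : ℕ) (hn : n ≠ 0) :
    ∑ l ∈ Finset.range (n+1), (if l % 2 = 0 then (n.choose l : ℚ) else 0) = 2 ^ (n-1) := by
  have h1 : ∑ l ∈ Finset.range (n+1), (n.choose l : ℚ) = 2 ^ n := by
    have h := Nat.sum_range_choose n
    calc ∑ l ∈ Finset.range (n+1), (n.choose l : ℚ)
        = ((∑ l ∈ Finset.range (n+1), n.choose l : ℕ) : ℚ) := by push_cast; rfl
      _ = 2 ^ n := by rw [h]; push_cast; rfl
  have h2 : ∑ l ∈ Finset.range (n+1), ((-1:ℚ)) ^ l * (n.choose l) = 0 := by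
    have h := Int.alternating_sum_range_choose_of_ne hn
    calc ∑ l ∈ Finset.range (n+1), ((-1:ℚ))^l * (n.choose l)
        = ((∑ l ∈ Finset.range (n+1), ((-1:ℤ))^l * n.choose l : ℤ) : ℚ) := by push_cast; rfl
      _ = 0 := by rw [h]; rfl
  have h3 : ∀ l, (if l % 2 = 0 then (n.choose l : ℚ) else 0)
      = ((n.choose l : ℚ) + (-1:ℚ)^l * (n.choose l))/2 := by
    intro l
    rcases Nat.even_or_odd l with h | h
    · rw [if_pos (Nat.even_iff.1 h), h.neg_one_pow]; ring
    · rw [if_neg (by rw [Nat.odd_iff] at h; omega), h.neg_one_pow]; ring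
  rw [Finset.sum_congr rfl (fun l _ => h3 l), ← Finset.sum_div, Finset.sum_add_distrib, h1, h2]
  have hp : (2:ℚ)^n = 2^(n-1) * 2 := by
    calc (2:ℚ)^n = 2^((n-1)+1) := by congr 1; omega
      _ = 2^(n-1) * 2 := by rw [pow_succ]
  rw [hp]
  ring

lemma RR_zero_left : ∀ n, RR 0 n = 2 - eulerNumber n := by
  intro n
  induction n using Nat.strong_induction_on with
  | _ n ih =>
    rcases Nat.eq_zero_or_pos n with rfl | hn
    · rw [RR_zero_right, eulerNumber_zero]; norm_num
    have hF := Frec n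
    rw [Finset.sum_range_succ'] at hF
    simp only [Nat.zero_mod, if_pos rfl, if_true, Nat.choose_zero_right, Nat.cast_one, one_mul, Nat.sub_zero] at hF
    have hrw : ∀ l ∈ Finset.range n,
        (if (l+1) % 2 = 0 then (n.choose (l+1) : ℚ) * RR 0 (n - (l+1)) else 0)
        = (if (l+1) % 2 = 0 then (n.choose (l+1) : ℚ) * (2 - eulerNumber (n - (l+1))) else 0) := by
      intro l hl
      rw [Finset.mem_range] at hl
      by_cases hpar : (l+1) % 2 = 0
      · rw [if_pos hpar, if_pos hpar, ih (n - (l+1)) (by omega)]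
      · rw [if_neg hpar, if_neg hpar]
    rw [Finset.sum_congr rfl hrw] at hF
    have split : ∑ l ∈ Finset.range n, (if (l+1) % 2 = 0 then (n.choose (l+1) : ℚ) * (2 - eulerNumber (n - (l+1))) else 0)
        = 2 * (∑ l ∈ Finset.range n, (if (l+1) % 2 = 0 then (n.choose (l+1) : ℚ) else 0))
          - ∑ l ∈ Finset.range n, (if (l+1) % 2 = 0 then (n.choose (l+1) : ℚ) * eulerNumber (n - (l+1)) else 0) := by
      rw [Finset.mul_sum, ← Finset.sum_sub_distrib]
      apply Finset.sum_congr rfl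
      intro l _
      by_cases hpar : (l+1) % 2 = 0
      · rw [if_pos hpar, if_pos hpar, if_pos hpar]; ring
      · rw [if_neg hpar, if_neg hpar, if_neg hpar]; ring
    rw [split] at hF
    have e1 : ∑ l ∈ Finset.range n, (if (l+1) % 2 = 0 then (n.choose (l+1) : ℚ) else 0)
        = 2 ^ (n-1) - 1 := by
      have := sum_even_choose n (by omega)
      rw [Finset.sum_range_succ'] at this
      simp only [Nat.zero_mod, if_pos rfl, if_true, Nat.choose_zero_right, Nat.cast_one] at this
      linarith
    have e2 : ∑ l ∈ Finset.range n, (if (l+1) % 2 = 0 then (n.choose (l+1) : ℚ) * eulerNumber (n - (l+1)) else 0)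
        = - eulerNumber n := by
      have := euler_rec' n
      rw [Finset.sum_range_succ', if_neg (show ¬ (n = 0) by omega)] at this
      simp only [Nat.zero_mod, if_pos rfl, if_true, Nat.choose_zero_right, Nat.cast_one, one_mul, Nat.sub_zero] at this
      linarith
    rw [e1, e2] at hF
    have hpow : (2:ℚ) ^ n = 2 * 2 ^ (n-1) := by
      calc (2:ℚ)^n = 2^((n-1)+1) := by congr 1; omega
        _ = 2 * 2^(n-1) := by rw [pow_succ]; ring
    rw [hpow] at hF
    linarith

lemma Phi : ∀ n k m : ℕ, k + m = n → RR k m + (-1:ℚ)^n * RR m k = 2 * (-1:ℚ)^k := by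
  intro n
  induction n using Nat.strong_induction_on with
  | _ n ih =>
    intro k
    induction k with
    | zero =>
      intro m hm
      subst hm
      rw [RR_zero_left, RR_zero_right]
      simp only [pow_zero, Nat.zero_add]
      rcases Nat.even_or_odd m with h | h
      · rw [h.neg_one_pow]; ring
      · rw [h.neg_one_pow, euler_odd m h]; ring
    | succ k ihk =>
      intro m hm
      subst hm
      have h1 := ihk (m+1) (by omega)
      have h2 := ih (k + m) (by omega) k m rfl
      have r1 := RR_succ k m
      have r2 := RR_succ m k
      have hn : ((-1:ℚ))^(k+1+m) = -(-1:ℚ)^(k+m) := by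
        rw [show k+1+m = (k+m)+1 from by omega, pow_succ]; ring
      have hk1 : ((-1:ℚ))^(k+1) = -(-1:ℚ)^k := by rw [pow_succ]; ring
      rw [hn] at h1 ⊢
      rw [hk1]
      linear_combination h1 - r1 - (-1:ℚ)^(k+m) * r2 - 2*h2

lemma Phi_even {k m : ℕ} (h : Even (k + m)) : RR k m + RR m k = 2 * (-1:ℚ)^k := by
  have h2 := Phi (k+m) k m rfl
  rwa [h.neg_one_pow, one_mul] at h2

section
variable {α : Type*} [DecidableEq α]

lemma powerset_sum (S : Finset α) (g : ℕ → ℚ) :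
    ∑ C ∈ S.powerset, g C.card = ∑ j ∈ Finset.range (S.card + 1), (S.card.choose j : ℚ) * g j := by
  rw [Finset.sum_powerset_apply_card]
  apply Finset.sum_congr rfl
  intro j _
  rw [nsmul_eq_mul]

lemma coef_eq (A B : Finset α) (hA : Even A.card) :
    ∑ C ∈ A.powerset, (if (C ∩ B).Nonempty ∧ (C \ B).Nonempty
        then (2:ℚ) ^ C.card * eulerNumber (A.card - C.card) else 0)
      = if Odd (A ∩ B).card then 4 else 0 := by
  have hkm : (A ∩ B).card + (A \ B).card = A.card := Finset.card_inter_add_card_sdiff A B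
  set n := A.card with hn
  set k := (A ∩ B).card with hk
  set m := (A \ B).card with hm
  have hpt : ∀ C : Finset α, (if (C ∩ B).Nonempty ∧ (C \ B).Nonempty
        then (2:ℚ) ^ C.card * eulerNumber (n - C.card) else 0)
      = (2:ℚ)^C.card * eulerNumber (n - C.card)
        - (if C ∩ B = ∅ then (2:ℚ)^C.card * eulerNumber (n - C.card) else 0)
        - (if C \ B = ∅ then (2:ℚ)^C.card * eulerNumber (n - C.card) else 0)
        + (if C = ∅ then (2:ℚ)^C.card * eulerNumber (n - C.card) else 0) := by
    intro C
    by_cases h1 : (C ∩ B).Nonempty <;> by_cases h2 : (C \ B).Nonempty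
    · have hCne : C ≠ ∅ := by
        rcases h1 with ⟨x, hx⟩
        exact Finset.ne_empty_of_mem (Finset.mem_of_mem_inter_left hx)
      rw [if_pos ⟨h1, h2⟩, if_neg (by simpa [← Finset.not_nonempty_iff_eq_empty] using h1),
        if_neg (by simpa [← Finset.not_nonempty_iff_eq_empty] using h2), if_neg hCne]
      ring
    · have hCne : C ≠ ∅ := by
        rcases h1 with ⟨x, hx⟩
        exact Finset.ne_empty_of_mem (Finset.mem_of_mem_inter_left hx)
      rw [if_neg (by tauto), if_neg (by simpa [← Finset.not_nonempty_iff_eq_empty] using h1),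
        if_pos (Finset.not_nonempty_iff_eq_empty.1 h2), if_neg hCne]
      ring
    · have hCne : C ≠ ∅ := by
        rcases h2 with ⟨x, hx⟩
        exact Finset.ne_empty_of_mem (Finset.mem_sdiff.1 hx).1
      rw [if_neg (by tauto), if_pos (Finset.not_nonempty_iff_eq_empty.1 h1),
        if_neg (by simpa [← Finset.not_nonempty_iff_eq_empty] using h2), if_neg hCne]
      ring
    · have e1 := Finset.not_nonempty_iff_eq_empty.1 h1
      have e2 := Finset.not_nonempty_iff_eq_empty.1 h2
      have hC : C = ∅ := by
        have := Finset.sdiff_union_inter C B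
        rw [e1, e2] at this
        simpa using this.symm
      rw [if_neg (by tauto), if_pos e1, if_pos e2, if_pos hC]
      ring
  rw [Finset.sum_congr rfl (fun C _ => hpt C)]
  rw [Finset.sum_add_distrib, Finset.sum_sub_distrib, Finset.sum_sub_distrib]
  have S0 : ∑ C ∈ A.powerset, (2:ℚ)^C.card * eulerNumber (n - C.card) = RR 0 n := by
    rw [powerset_sum A (fun c => (2:ℚ)^c * eulerNumber (n - c)), RR_def]
    apply Finset.sum_congr rfl
    intro j _
    rw [show 0 + n - j = n - j from by omega]
    ring
  have f1 : A.powerset.filter (fun C => C ∩ B = ∅) = (A \ B).powerset := by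
    ext C
    rw [Finset.mem_filter, Finset.mem_powerset, Finset.mem_powerset, Finset.subset_sdiff,
      Finset.disjoint_iff_inter_eq_empty]
  have f2 : A.powerset.filter (fun C => C \ B = ∅) = (A ∩ B).powerset := by
    ext C
    rw [Finset.mem_filter, Finset.mem_powerset, Finset.mem_powerset, Finset.subset_inter_iff,
      Finset.sdiff_eq_empty_iff_subset]
  have S1 : ∑ C ∈ A.powerset, (if C ∩ B = ∅ then (2:ℚ)^C.card * eulerNumber (n - C.card) else 0)
      = RR k m := by
    rw [← Finset.sum_filter, f1, powerset_sum (A \ B) (fun c => (2:ℚ)^c * eulerNumber (n - c)), RR_def]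
    apply Finset.sum_congr rfl
    intro j _
    rw [show k + m - j = n - j from by omega]
    ring
  have S2 : ∑ C ∈ A.powerset, (if C \ B = ∅ then (2:ℚ)^C.card * eulerNumber (n - C.card) else 0)
      = RR m k := by
    rw [← Finset.sum_filter, f2, powerset_sum (A ∩ B) (fun c => (2:ℚ)^c * eulerNumber (n - c)), RR_def]
    apply Finset.sum_congr rfl
    intro j _
    rw [show m + k - j = n - j from by omega]
    ring
  have S3 : ∑ C ∈ A.powerset, (if C = ∅ then (2:ℚ)^C.card * eulerNumber (n - C.card) else 0)
      = eulerNumber n := by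
    rw [Finset.sum_ite_eq' A.powerset ∅ (fun C => (2:ℚ)^C.card * eulerNumber (n - C.card))]
    rw [if_pos (Finset.empty_mem_powerset A)]
    simp
  rw [S0, S1, S2, S3, RR_zero_left]
  have hZ : RR k m + RR m k = 2 * (-1:ℚ)^k := Phi_even (by rw [hkm]; exact hA)
  rcases Nat.even_or_odd k with hpar | hpar
  · rw [if_neg (Nat.not_odd_iff_even.2 hpar)]
    rw [hpar.neg_one_pow] at hZ
    linarith
  · rw [if_pos hpar]
    rw [hpar.neg_one_pow] at hZ
    linarith

end

section
variable {α : Type*} [DecidableEq α]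

lemma coef_eq_real (A B : Finset α) (hA : Even A.card) :
    ∑ C ∈ A.powerset, (if (C ∩ B).Nonempty ∧ (C \ B).Nonempty
        then (2:ℝ) ^ C.card * (eulerNumber (A.card - C.card) : ℝ) else 0)
      = if Odd (A ∩ B).card then 4 else 0 := by
  have h := coef_eq A B hA
  calc ∑ C ∈ A.powerset, (if (C ∩ B).Nonempty ∧ (C \ B).Nonempty
        then (2:ℝ) ^ C.card * (eulerNumber (A.card - C.card) : ℝ) else 0)
      = ∑ C ∈ A.powerset, (((if (C ∩ B).Nonempty ∧ (C \ B).Nonempty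
        then (2:ℚ) ^ C.card * eulerNumber (A.card - C.card) else 0) : ℚ) : ℝ) := by
        apply Finset.sum_congr rfl
        intro C _
        split
        · push_cast; ring
        · norm_num
    _ = (((if Odd (A ∩ B).card then (4:ℚ) else 0) : ℚ) : ℝ) := by
        rw [← h]
        push_cast
        rfl
    _ = if Odd (A ∩ B).card then 4 else 0 := by
        split <;> norm_num
end

/-- For a symmetrized split weight function `w` (`w B ≥ 0`,
`w B = w Bᶜ`), with phylogenetic diversities
`δ A = ∑_{B : A ∩ B ≠ ∅, A ∖ B ≠ ∅} w B` and `μ A = ∑_{B : |A ∩ B| odd} w B`: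
if `|A|` is even then
`μ A = (1/4) ∑_{B ⊆ A, |B| even} 2^{|B|} 𝔼_{|A|−|B|} δ B`. -/
theorem mu_from_even_diversity
    {α : Type*} [Fintype α] [DecidableEq α]
    (w : Finset α → ℝ) (hw : ∀ B : Finset α, 0 ≤ w B)
    (hwsym : ∀ B : Finset α, w B = w Bᶜ)
    (δ : Finset α → ℝ)
    (hδ : ∀ A : Finset α, δ A =
      ∑ B ∈ univ.filter (fun B : Finset α => (A ∩ B).Nonempty ∧ (A \ B).Nonempty), w B)
    (A : Finset α) (hA : Even A.card) :
    (∑ B ∈ univ.filter (fun B : Finset α => Odd (A ∩ B).card), w B) =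
      1 / 4 * ∑ B ∈ A.powerset.filter (fun B : Finset α => Even B.card),
        2 ^ B.card * (eulerNumber (A.card - B.card) : ℝ) * δ B := by
  classical
  have hstep1 : ∑ B ∈ A.powerset.filter (fun B : Finset α => Even B.card),
      2 ^ B.card * (eulerNumber (A.card - B.card) : ℝ) * δ B
      = ∑ C ∈ A.powerset, 2 ^ C.card * (eulerNumber (A.card - C.card) : ℝ) * δ C := by
    apply Finset.sum_subset (Finset.filter_subset _ _)
    intro C hC hC2
    have hCA : C ⊆ A := Finset.mem_powerset.1 hC
    have hCodd : Odd C.card := by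
      rw [← Nat.not_even_iff_odd]
      intro he
      exact hC2 (Finset.mem_filter.2 ⟨hC, he⟩)
    have hodd : Odd (A.card - C.card) :=
      Nat.Even.sub_odd (Finset.card_le_card hCA) hA hCodd
    rw [euler_odd _ hodd]
    norm_num
  rw [hstep1]
  have hδ' : ∀ C : Finset α, δ C
      = ∑ B : Finset α, (if (C ∩ B).Nonempty ∧ (C \ B).Nonempty then w B else 0) := by
    intro C
    rw [hδ C, Finset.sum_filter]
  calc (∑ B ∈ univ.filter (fun B : Finset α => Odd (A ∩ B).card), w B)
      = ∑ B : Finset α, (if Odd (A ∩ B).card then w B else 0) := Finset.sum_filter _ _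
    _ = ∑ B : Finset α, 1/4 * ((if Odd (A ∩ B).card then (4:ℝ) else 0) * w B) := by
        apply Finset.sum_congr rfl
        intro B _
        split <;> ring
    _ = ∑ B : Finset α, 1/4 * ((∑ C ∈ A.powerset, (if (C ∩ B).Nonempty ∧ (C \ B).Nonempty
          then (2:ℝ) ^ C.card * (eulerNumber (A.card - C.card) : ℝ) else 0)) * w B) := by
        apply Finset.sum_congr rfl
        intro B _
        rw [coef_eq_real A B hA]
    _ = 1/4 * ∑ B : Finset α, ∑ C ∈ A.powerset, (if (C ∩ B).Nonempty ∧ (C \ B).Nonempty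
          then (2:ℝ) ^ C.card * (eulerNumber (A.card - C.card) : ℝ) else 0) * w B := by
        rw [Finset.mul_sum]
        apply Finset.sum_congr rfl
        intro B _
        rw [Finset.sum_mul]
    _ = 1/4 * ∑ C ∈ A.powerset, ∑ B : Finset α, (if (C ∩ B).Nonempty ∧ (C \ B).Nonempty
          then (2:ℝ) ^ C.card * (eulerNumber (A.card - C.card) : ℝ) else 0) * w B := by
        rw [Finset.sum_comm]
    _ = 1/4 * ∑ C ∈ A.powerset, 2 ^ C.card * (eulerNumber (A.card - C.card) : ℝ) * δ C := by
        congr 1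
        apply Finset.sum_congr rfl
        intro C _
        rw [hδ' C, Finset.mul_sum]
        apply Finset.sum_congr rfl
        intro B _
        split <;> ring
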